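/- Let A ∈ ℝ^{n×n}, B ∈ ℝ^{n×m}, K ∈ ℝ^{m×n}, σ > 0, and let c_A > 0 and c_Φ ≥ 0 satisfy ‖A‖ ≤ c_A and ‖A+B·K‖ ≤ c_Φ. Define τ_d(σ) := (1/c_A)·log((σ/(1+σ))·c_A/max{c_Φ, 1} + 1). Then: (i) τ_d(σ) ≤ τ_m(σ), where τ_m(σ) := (1/‖A‖)·log((σ/(1+σ))·‖A‖/max{‖A+B·K‖, 1} + 1) if A ≠ 0 and τ_m(σ) := (σ/(1+σ))·(1/max{‖A+B·K‖, 1}) if A = 0; and consequently (ii) for every T > 0, every continuous d : [0,T] → ℝⁿ, and every differentiable x : [0,T] → ℝⁿ with x′(t) = A·x(t) + B·K·x(0) + d(t) on [0,T], one has ‖x(0) − x(t)‖ ≤ σ·(‖x(t)‖ + sup_{s∈[0,t]}‖d(s)‖) for all t ∈ [0, min(T, τ_d(σ))]. -/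

import Mathlib

open Matrix

/-- The operator norm on square matrices induced by the Euclidean norm
(spectral norm). -/
noncomputable def l2opNorm {n : ℕ} (A : Matrix (Fin n) (Fin n) ℝ) : ℝ :=
  ‖(Matrix.toEuclideanCLM (𝕜 := ℝ) A :
      EuclideanSpace ℝ (Fin n) →L[ℝ] EuclideanSpace ℝ (Fin n))‖

lemma l2opNorm_nonneg {n : ℕ} (A : Matrix (Fin n) (Fin n) ℝ) : 0 ≤ l2opNorm A :=
  norm_nonneg _

lemma l2opNorm_zero {n : ℕ} : l2opNorm (0 : Matrix (Fin n) (Fin n) ℝ) = 0 := by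
  rw [l2opNorm, map_zero, norm_zero]

lemma l2opNorm_pos {n : ℕ} {A : Matrix (Fin n) (Fin n) ℝ} (h : A ≠ 0) : 0 < l2opNorm A := by
  rw [l2opNorm]
  set_option synthInstance.maxHeartbeats 1000000 in
  rw [norm_pos_iff]
  intro hc
  exact h (by simpa using (map_eq_zero_iff _ (Matrix.toEuclideanCLM (𝕜 := ℝ) (n := Fin n)).injective).mp hc)

lemma mulVec_norm_le {n : ℕ} (A : Matrix (Fin n) (Fin n) ℝ) (v : EuclideanSpace ℝ (Fin n)) :
    ‖(EuclideanSpace.equiv (Fin n) ℝ).symm (A.mulVec v)‖ ≤ l2opNorm A * ‖v‖ := by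
  have h : (EuclideanSpace.equiv (Fin n) ℝ).symm (A.mulVec v)
      = Matrix.toEuclideanCLM (𝕜 := ℝ) A v := rfl
  rw [h]
  exact (Matrix.toEuclideanCLM (𝕜 := ℝ) A).le_opNorm v

lemma log_div_mono {c : ℝ} (hc : 0 < c) {a b : ℝ} (ha : 0 < a) (hab : a ≤ b) :
    (1/b) * Real.log (c*b + 1) ≤ (1/a) * Real.log (c*a + 1) := by
  have hb : 0 < b := ha.trans_le hab
  set θ := a / b with hθ
  have hθ0 : 0 < θ := div_pos ha hb
  have hθb : θ * b = a := div_mul_cancel₀ a hb.ne'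
  have key : θ * Real.log (c*b+1) ≤ Real.log (c*a+1) := by
    have hcon := strictConcaveOn_log_Ioi.concaveOn
    have hmem1 : (1:ℝ) ∈ Set.Ioi (0:ℝ) := Set.mem_Ioi.mpr one_pos
    have hmem2 : c*b+1 ∈ Set.Ioi (0:ℝ) := Set.mem_Ioi.mpr (by positivity)
    have hw1 : (0:ℝ) ≤ 1-θ := by rw [hθ, sub_nonneg]; exact div_le_one_of_le₀ hab hb.le
    have h2 := hcon.2 hmem1 hmem2 hw1 hθ0.le (show (1-θ)+θ = 1 by ring)
    simp only [smul_eq_mul, Real.log_one, mul_zero, zero_add] at h2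
    calc θ * Real.log (c*b+1) ≤ Real.log ((1-θ)*1 + θ*(c*b+1)) := h2
      _ = Real.log (c*a+1) := by rw [show (1-θ)*1 + θ*(c*b+1) = c*(θ*b)+1 by ring, hθb]
  have : (1/b) * Real.log (c*b+1) = (1/a) * (θ * Real.log (c*b+1)) := by
    rw [hθ]; field_simp
  rw [this]
  exact mul_le_mul_of_nonneg_left key (by positivity)

theorem stmt_17 (n m : ℕ)
    (A : Matrix (Fin n) (Fin n) ℝ) (B : Matrix (Fin n) (Fin m) ℝ)
    (K : Matrix (Fin m) (Fin n) ℝ) (σ : ℝ) (hσ : 0 < σ)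
    (cA cΦ : ℝ) (hcA : 0 < cA) (hcΦ : 0 ≤ cΦ)
    (hA : l2opNorm A ≤ cA) (hΦ : l2opNorm (A + B * K) ≤ cΦ)
    (τd τm : ℝ)
    (hτd : τd = (1 / cA) * Real.log ((σ / (1 + σ)) * (cA / max cΦ 1) + 1))
    (hτm : τm = if A ≠ 0 then
        (1 / l2opNorm A) *
          Real.log ((σ / (1 + σ)) * (l2opNorm A / max (l2opNorm (A + B * K)) 1) + 1)
      else (σ / (1 + σ)) * (1 / max (l2opNorm (A + B * K)) 1)) :
    τd ≤ τm ∧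
      ∀ T : ℝ, 0 < T →
        ∀ d x : ℝ → EuclideanSpace ℝ (Fin n),
          ContinuousOn d (Set.Icc 0 T) →
          (∀ t ∈ Set.Icc (0 : ℝ) T,
            HasDerivWithinAt x
              ((EuclideanSpace.equiv (Fin n) ℝ).symm
                  (A.mulVec (x t) + (B * K).mulVec (x 0)) + d t)
              (Set.Icc 0 T) t) →
          ∀ t ∈ Set.Icc (0 : ℝ) (min T τd),
            ‖x 0 - x t‖ ≤ σ * (‖x t‖ + sSup ((fun u => ‖d u‖) '' Set.Icc 0 t)) := by
  have hσ1 : (0:ℝ) < 1 + σ := by linarith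
  set β : ℝ := σ / (1 + σ) with hβ
  have hβ0 : 0 < β := div_pos hσ hσ1
  have hβeq : β * (1 + σ) = σ := by rw [hβ]; field_simp
  set Φ := A + B * K with hΦdef
  set M : ℝ := max cΦ 1 with hM
  have hM1 : (1:ℝ) ≤ M := le_max_right _ _
  have hM0 : (0:ℝ) < M := lt_of_lt_of_le one_pos hM1
  have hΦM : l2opNorm Φ ≤ M := le_trans hΦ (le_max_left _ _)
  set Mm : ℝ := max (l2opNorm Φ) 1 with hMm
  have hMm1 : (1:ℝ) ≤ Mm := le_max_right _ _
  have hMm0 : (0:ℝ) < Mm := lt_of_lt_of_le one_pos hMm1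
  have hMmM : Mm ≤ M := max_le_max hΦ le_rfl
  constructor
  · -- part (i)
    by_cases hA0 : A ≠ 0
    · rw [hτm, if_pos hA0, hτd]
      set a := l2opNorm A with ha
      have ha0 : 0 < a := l2opNorm_pos hA0
      have hc : 0 < β / Mm := div_pos hβ0 hMm0
      have step1 : (1/cA) * Real.log (β * (cA / M) + 1) ≤
          (1/cA) * Real.log (β * (cA / Mm) + 1) := by
        apply mul_le_mul_of_nonneg_left _ (by positivity)
        apply Real.log_le_log (by positivity)
        gcongr
      have step2 : (1/cA) * Real.log (β * (cA / Mm) + 1) ≤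
          (1/a) * Real.log (β * (a / Mm) + 1) := by
        have e1 : β * (cA / Mm) + 1 = (β/Mm) * cA + 1 := by ring
        have e2 : β * (a / Mm) + 1 = (β/Mm) * a + 1 := by ring
        rw [e1, e2]
        exact log_div_mono hc ha0 hA
      exact le_trans step1 step2
    · rw [hτm, if_neg hA0, hτd]
      have hlog : Real.log (β * (cA / M) + 1) ≤ β * (cA / M) := by
        have := Real.log_le_sub_one_of_pos (x := β * (cA / M) + 1) (by positivity)
        linarith
      have step1 : (1/cA) * Real.log (β * (cA / M) + 1) ≤ (1/cA) * (β * (cA / M)) :=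
        mul_le_mul_of_nonneg_left hlog (by positivity)
      have e1 : (1/cA) * (β * (cA / M)) = β * (1/M) := by field_simp
      have step2 : β * (1/M) ≤ β * (1/Mm) := by gcongr
      linarith
  · -- part (ii)
    intro T hT d x hd hx t ht
    obtain ⟨ht0, htm⟩ := ht
    have htT : t ≤ T := le_trans htm (min_le_left _ _)
    have htτ : t ≤ τd := le_trans htm (min_le_right _ _)
    set D : ℝ := sSup ((fun u => ‖d u‖) '' Set.Icc 0 t) with hD
    have hsub : Set.Icc (0:ℝ) t ⊆ Set.Icc 0 T := Set.Icc_subset_Icc le_rfl htT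
    have hdc : ContinuousOn (fun u => ‖d u‖) (Set.Icc 0 t) := (hd.mono hsub).norm
    have hbdd : BddAbove ((fun u => ‖d u‖) '' Set.Icc 0 t) :=
      (isCompact_Icc.image_of_continuousOn hdc).bddAbove
    have hDmem : ∀ s ∈ Set.Icc (0:ℝ) t, ‖d s‖ ≤ D := fun s hs =>
      le_csSup hbdd (Set.mem_image_of_mem _ hs)
    have hD0 : 0 ≤ D := le_trans (norm_nonneg (d 0)) (hDmem 0 (Set.left_mem_Icc.mpr ht0))
    set ε : ℝ := M * ‖x 0‖ + D with hε
    have hε0 : 0 ≤ ε := by positivity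
    set e : ℝ → EuclideanSpace ℝ (Fin n) := fun s => x 0 - x s with he
    have hxc : ContinuousOn x (Set.Icc 0 T) := fun s hs => (hx s hs).continuousWithinAt
    have hec : ContinuousOn e (Set.Icc 0 t) := continuousOn_const.sub (hxc.mono hsub)
    have hderiv : ∀ s ∈ Set.Ico (0:ℝ) t, HasDerivWithinAt e
        (-((EuclideanSpace.equiv (Fin n) ℝ).symm
          (A.mulVec (x s) + (B * K).mulVec (x 0)) + d s)) (Set.Ici s) s := by
      intro s hs
      have hsT : s ∈ Set.Icc (0:ℝ) T := ⟨hs.1, le_of_lt (lt_of_lt_of_le hs.2 htT)⟩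
      have h1 := (hx s hsT).const_sub (x 0)
      have hmem : Set.Icc (0:ℝ) T ∈ nhdsWithin s (Set.Ici s) := by
        apply Filter.mem_of_superset
          (Icc_mem_nhdsGE_of_mem (⟨le_rfl, lt_of_lt_of_le hs.2 htT⟩ : s ∈ Set.Ico s T))
        exact Set.Icc_subset_Icc hs.1 le_rfl
      exact h1.mono_of_mem_nhdsWithin hmem
    have hbound : ∀ s ∈ Set.Ico (0:ℝ) t,
        ‖-((EuclideanSpace.equiv (Fin n) ℝ).symm
          (A.mulVec (x s) + (B * K).mulVec (x 0)) + d s)‖ ≤ cA * ‖e s‖ + ε := by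
      intro s hs
      have hsplit : (EuclideanSpace.equiv (Fin n) ℝ).symm
          (A.mulVec (x s) + (B * K).mulVec (x 0))
          = Matrix.toEuclideanCLM (𝕜 := ℝ) A (x s)
            + Matrix.toEuclideanCLM (𝕜 := ℝ) (B * K) (x 0) := rfl
      have hdecomp : Matrix.toEuclideanCLM (𝕜 := ℝ) A (x s)
            + Matrix.toEuclideanCLM (𝕜 := ℝ) (B * K) (x 0)
          = Matrix.toEuclideanCLM (𝕜 := ℝ) Φ (x 0)
            - Matrix.toEuclideanCLM (𝕜 := ℝ) A (e s) := by
        rw [hΦdef, map_add, he]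
        simp only [ContinuousLinearMap.add_apply, map_sub]
        abel
      rw [norm_neg, hsplit, hdecomp]
      have hb1 : ‖Matrix.toEuclideanCLM (𝕜 := ℝ) Φ (x 0)‖ ≤ M * ‖x 0‖ :=
        le_trans ((Matrix.toEuclideanCLM (𝕜 := ℝ) Φ).le_opNorm (x 0))
          (mul_le_mul_of_nonneg_right hΦM (norm_nonneg _))
      have hb2 : ‖Matrix.toEuclideanCLM (𝕜 := ℝ) A (e s)‖ ≤ cA * ‖e s‖ :=
        le_trans ((Matrix.toEuclideanCLM (𝕜 := ℝ) A).le_opNorm (e s))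
          (mul_le_mul_of_nonneg_right hA (norm_nonneg _))
      have hb3 : ‖d s‖ ≤ D := hDmem s ⟨hs.1, hs.2.le⟩
      calc ‖Matrix.toEuclideanCLM (𝕜 := ℝ) Φ (x 0)
            - Matrix.toEuclideanCLM (𝕜 := ℝ) A (e s) + d s‖
          ≤ ‖Matrix.toEuclideanCLM (𝕜 := ℝ) Φ (x 0)
            - Matrix.toEuclideanCLM (𝕜 := ℝ) A (e s)‖ + ‖d s‖ := norm_add_le _ _
        _ ≤ (‖Matrix.toEuclideanCLM (𝕜 := ℝ) Φ (x 0)‖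
            + ‖Matrix.toEuclideanCLM (𝕜 := ℝ) A (e s)‖) + ‖d s‖ := by
            gcongr
            exact norm_sub_le _ _
        _ ≤ cA * ‖e s‖ + ε := by rw [hε]; linarith
    have hgron := norm_le_gronwallBound_of_norm_deriv_right_le (δ := 0) hec hderiv
      (by simp [he]) hbound
    have hgt := hgron t ⟨ht0, le_rfl⟩
    rw [gronwallBound_of_K_ne_0 hcA.ne'] at hgt
    simp only [sub_zero, zero_mul, zero_add] at hgt
    have hexp : Real.exp (cA * t) - 1 ≤ β * (cA / M) := by
      have harg : (0:ℝ) < β * (cA / M) + 1 := by positivity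
      have h1 : cA * t ≤ cA * τd := mul_le_mul_of_nonneg_left htτ hcA.le
      have h2 : Real.exp (cA * τd) = β * (cA / M) + 1 := by
        rw [hτd, show cA * ((1/cA) * Real.log (β * (cA / M) + 1))
            = Real.log (β * (cA / M) + 1) by field_simp]
        exact Real.exp_log harg
      have := Real.exp_le_exp.mpr h1
      linarith
    have hE : ‖e t‖ ≤ ε / cA * (β * (cA / M)) :=
      le_trans hgt (mul_le_mul_of_nonneg_left hexp (by positivity))
    have heq : ε / cA * (β * (cA / M)) = β * ‖x 0‖ + β * (D / M) := by
      rw [hε]; field_simp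
    have hDM : D / M ≤ D := div_le_self hD0 hM1
    have het : e t = x 0 - x t := rfl
    have hx0 : ‖x 0‖ ≤ ‖x t‖ + ‖e t‖ := by
      rw [het]
      simpa using norm_add_le (x t) (x 0 - x t)
    clear_value β M Mm D ε e
    have hfinal : ‖e t‖ ≤ β * (‖x t‖ + ‖e t‖) + β * D := by
      rw [heq] at hE
      have h1 := mul_le_mul_of_nonneg_left hx0 hβ0.le
      have h2 := mul_le_mul_of_nonneg_left hDM hβ0.le
      linarith
    rw [← het]
    have h3 := mul_le_mul_of_nonneg_right hfinal hσ1.le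
    rw [hβ] at h3
    field_simp at h3
    linarith
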